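/- Let F be a field with |F| ≥ 2k+1 whose characteristic is 0 or greater than d, and let d ≥ 2k+1. Suppose f = Σ_{i=1}^k c_i·ℓ_i^d = Σ_{i=1}^k c'_i·a_i^d, where both representations are minimal: all c_i and all c'_i are nonzero, the ℓ_1,…,ℓ_k are polynomials of total degree exactly 1 that are pairwise not scalar multiples of one another, and likewise for a_1,…,a_k. Then there is a permutation π of {1,…,k} such that for every i, ℓ_i is a nonzero scalar multiple of a_{π(i)}. -/

import Mathlib

open MvPolynomial

lemma monomial_deg_le_one {n : ℕ} (m : Fin n →₀ ℕ) (hm : (m.sum fun _ e => e) ≤ 1)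
    (h0 : m ≠ 0) : ∃ j, m = Finsupp.single j 1 := by
  obtain ⟨j, hj⟩ := Finsupp.ne_iff.mp h0
  simp only [Finsupp.coe_zero, Pi.zero_apply] at hj
  refine ⟨j, ?_⟩
  have hsum : (m.sum fun _ e => e) = ∑ x ∈ m.support, m x := rfl
  have hjs : j ∈ m.support := Finsupp.mem_support_iff.mpr hj
  have h1 : m j ≤ ∑ x ∈ m.support, m x := Finset.single_le_sum (fun _ _ => Nat.zero_le _) hjs
  ext j'
  rcases eq_or_ne j' j with rfl | hne
  · have : m j' = 1 := le_antisymm (by omega) (Nat.one_le_iff_ne_zero.mpr hj)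
    simp [this]
  · have : ∑ x ∈ m.support, m x ≤ 1 := hsum ▸ hm
    have hj'0 : m j' = 0 := by
      by_contra hj'
      have hj's : j' ∈ m.support := Finsupp.mem_support_iff.mpr hj'
      have := Finset.add_sum_erase _ m hjs
      have h2 : j' ∈ m.support.erase j := Finset.mem_erase.mpr ⟨hne, hj's⟩
      have h3 : m j' ≤ ∑ x ∈ m.support.erase j, m x :=
        Finset.single_le_sum (fun _ _ => Nat.zero_le _) h2
      omega
    simp [hj'0, Finsupp.single_apply, Ne.symm hne]

lemma deg_le_one_decomp {F : Type*} [CommSemiring F] {n : ℕ} (p : MvPolynomial (Fin n) F)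
    (h : p.totalDegree ≤ 1) :
    p = C (coeff 0 p) + ∑ j, C (coeff (Finsupp.single j 1) p) * X j := by
  apply MvPolynomial.ext
  intro m
  rw [coeff_add, coeff_C]
  rw [coeff_sum]
  simp only [coeff_C_mul, coeff_X']
  rcases eq_or_ne m 0 with rfl | h0
  · have : ∀ j : Fin n, Finsupp.single j 1 ≠ (0 : Fin n →₀ ℕ) := by
      intro j hj
      simpa using (Finsupp.single_eq_zero.mp hj)
    simp [this]
  · rcases em (∃ j, m = Finsupp.single j 1) with ⟨j0, rfl⟩ | hnm
    · rw [Finset.sum_eq_single j0]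
      · simp [Ne.symm h0]
      · intro j _ hj
        have : Finsupp.single j 1 ≠ Finsupp.single j0 1 := by
          simp [Finsupp.single_eq_single_iff, hj]
        simp [this]
      · simp
    · push_neg at hnm
      have hcm : coeff m p = 0 := by
        by_contra hc
        have := le_totalDegree (Finsupp.mem_support_iff.mpr hc) (p := p)
        have hm1 : (m.sum fun _ e => e) ≤ 1 := this.trans h
        obtain ⟨j, hj⟩ := monomial_deg_le_one m hm1 h0
        exact hnm j hj
      have : ∀ j : Fin n, Finsupp.single j 1 ≠ m := fun j hj => hnm j hj.symm
      simp [hcm, Ne.symm h0, this]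

lemma affine_SZ {F : Type*} [Field F] {n : ℕ} {ι : Type*} [Fintype ι]
    (q : ι → MvPolynomial (Fin n) F)
    (h0 : ∀ i, q i ≠ 0) (hdeg : ∀ i, (q i).totalDegree ≤ 1)
    (hcard : ((Fintype.card ι + 1 : ℕ) : Cardinal) ≤ Cardinal.mk F) :
    ∃ w : Fin n → F, ∀ i, eval w (q i) ≠ 0 := by
  classical
  set e : ι → F := fun i => coeff 0 (q i) with he
  set co : ι → Fin n → F := fun i j => coeff (Finsupp.single j 1) (q i) with hco
  set qt : ι → MvPolynomial (Fin (n+1)) F :=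
    fun i => C (e i) * X 0 + ∑ j : Fin n, C (co i j) * X j.succ with hqt
  have hhom : ∀ i, (qt i).IsHomogeneous 1 := by
    intro i
    exact (isHomogeneous_C_mul_X _ _).add
      (IsHomogeneous.sum _ _ _ (fun j _ => isHomogeneous_C_mul_X _ _))
  have hqt0 : ∀ i, qt i ≠ 0 := by
    intro i hzero
    apply h0 i
    have : aeval (Fin.cases 1 X : Fin (n+1) → MvPolynomial (Fin n) F) (qt i) = q i := by
      rw [hqt]
      simp only [map_add, map_mul, map_sum, aeval_C, aeval_X, algebraMap_eq]
      rw [deg_le_one_decomp (q i) (hdeg i)]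
      simp [Fin.cases_succ, he, hco]
    rw [← this, hzero, map_zero]
  set P : MvPolynomial (Fin (n+1)) F := X 0 * ∏ i, qt i with hP
  have hPhom : P.IsHomogeneous (1 + Fintype.card ι) := by
    apply (isHomogeneous_X _ _).mul
    have := IsHomogeneous.prod (Finset.univ : Finset ι) qt (fun _ => 1) (fun i _ => hhom i)
    simpa using this
  have hP0 : P ≠ 0 :=
    mul_ne_zero (X_ne_zero 0) (Finset.prod_ne_zero_iff.mpr fun i _ => hqt0 i)
  have hcard' : ((1 + Fintype.card ι : ℕ) : Cardinal) ≤ Cardinal.mk F := by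
    rwa [Nat.add_comm]
  obtain ⟨z, hz⟩ : ∃ z : Fin (n+1) → F, eval z P ≠ 0 := by
    by_contra hall
    push_neg at hall
    exact hP0 (hPhom.eq_zero_of_forall_eval_eq_zero_of_le_card hall (by exact_mod_cast hcard'))
  rw [hP, map_mul, map_prod] at hz
  have hz0 : z 0 ≠ 0 := by
    intro h; rw [eval_X, h] at hz; simp at hz
  have hzi : ∀ i, eval z (qt i) ≠ 0 := by
    intro i hi
    apply hz
    rw [Finset.prod_eq_zero (Finset.mem_univ i) hi, mul_zero]
  refine ⟨fun j => z j.succ * (z 0)⁻¹, fun i => ?_⟩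
  have hdecomp := deg_le_one_decomp (q i) (hdeg i)
  rw [hdecomp]
  simp only [map_add, map_sum, map_mul, eval_C, eval_X]
  have : eval z (qt i) = e i * z 0 + ∑ j : Fin n, co i j * z j.succ := by
    rw [hqt]; simp
  intro hcontra
  apply hzi i
  rw [this]
  have : e i + ∑ j : Fin n, co i j * (z j.succ * (z 0)⁻¹) = 0 := hcontra
  have h2 : (e i + ∑ j : Fin n, co i j * (z j.succ * (z 0)⁻¹)) * z 0 = 0 := by rw [this, zero_mul]
  rw [add_mul, Finset.sum_mul] at h2
  convert h2 using 2
  apply Finset.sum_congr rfl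
  intro j _
  field_simp

lemma choose_cast_ne_zero {F : Type*} [Field F] {d r : ℕ}
    (hchar : CharZero F ∨ d < ringChar F) (hr : r ≤ d) : ((d.choose r : ℕ) : F) ≠ 0 := by
  rcases hchar with h | h
  · exact Nat.cast_ne_zero.mpr (Nat.choose_pos hr).ne'
  · have hp : (ringChar F).Prime := by
      rcases CharP.char_is_prime_or_zero F (ringChar F) with hp | h0
      · exact hp
      · omega
    rw [Ne, CharP.cast_eq_zero_iff F (ringChar F)]
    intro hdvd
    have hdvd2 : ringChar F ∣ d.factorial := by
      refine hdvd.trans ⟨r.factorial * (d - r).factorial, ?_⟩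
      rw [← Nat.choose_mul_factorial_mul_factorial hr, mul_assoc]
    have := (Nat.Prime.dvd_factorial hp).mp hdvd2
    omega

open Polynomial in
lemma univ_vandermonde {F : Type*} [Field F] {d : ℕ}
    (hchar : CharZero F ∨ d < ringChar F)
    (s : Finset F) (hs : s.card ≤ d + 1) (E : F → F)
    (hsum : ∑ u ∈ s, Polynomial.C (E u) * (Polynomial.X + Polynomial.C u) ^ d = 0) :
    ∀ u ∈ s, E u = 0 := by
  classical
  set m := s.card with hm
  have key : ∀ r : ℕ, r < m → ∑ u ∈ s, E u * u ^ r = 0 := by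
    intro r hrm
    have hrd : r ≤ d := by omega
    have hco := congrArg (fun p => Polynomial.coeff p (d - r)) hsum
    simp only [Polynomial.finset_sum_coeff, Polynomial.coeff_C_mul,
      Polynomial.coeff_X_add_C_pow, Polynomial.coeff_zero] at hco
    have hdr : d - (d - r) = r := by omega
    rw [hdr, Nat.choose_symm hrd] at hco
    have hc0 : ((d.choose r : ℕ) : F) ≠ 0 := choose_cast_ne_zero hchar hrd
    have : (∑ u ∈ s, E u * u ^ r) * ((d.choose r : ℕ) : F) = 0 := by
      rw [Finset.sum_mul, ← hco]
      exact Finset.sum_congr rfl fun u _ => by ring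
    rcases mul_eq_zero.mp this with h | h
    · exact h
    · exact absurd h hc0
  set eqv : Fin m ≃ s := s.equivFin.symm with heqv
  set g : Fin m → F := fun t => (eqv t : F) with hg
  have hginj : Function.Injective g := fun t1 t2 h12 =>
    eqv.injective (Subtype.ext h12)
  have hsum2 : ∀ r : Fin m, ∑ t : Fin m, (E (g t)) * g t ^ (r : ℕ) = 0 := by
    intro r
    rw [← key r r.isLt, ← Finset.sum_coe_sort s (fun u => E u * u ^ (r : ℕ))]
    exact Equiv.sum_comp eqv (fun u => E (u : F) * (u : F) ^ (r : ℕ))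
  have hEzero := Matrix.eq_zero_of_forall_pow_sum_mul_pow_eq_zero hginj hsum2
  intro u hu
  have : g (eqv.symm ⟨u, hu⟩) = u := by simp [hg]
  rw [← this]
  exact congrFun hEzero _

lemma key_indep {F : Type*} [Field F] {n : ℕ} {ι : Type*} [Fintype ι] [DecidableEq ι]
    {d : ℕ}
    (hchar : CharZero F ∨ d < ringChar F)
    (hF : ((Fintype.card ι + 1 : ℕ) : Cardinal) ≤ Cardinal.mk F)
    (hd : Fintype.card ι ≤ d)
    (g : ι → MvPolynomial (Fin n) F) (b : ι → F)
    (hdeg : ∀ i, (g i).totalDegree = 1)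
    (i0 : ι)
    (hnp : ∀ i, i ≠ i0 → ∀ t : F, g i0 ≠ t • g i)
    (heq : ∑ i, C (b i) * (g i) ^ d = 0) :
    b i0 = 0 := by
  classical
  set co : ι → Fin n → F := fun i j => coeff (Finsupp.single j 1) (g i) with hco
  set e : ι → F := fun i => coeff 0 (g i) with he
  set L : ι → MvPolynomial (Fin n) F := fun i => ∑ j, C (co i j) * X j with hL
  -- the linear part of each g i is nonzero
  have hL0 : ∀ i, L i ≠ 0 := by
    intro i hzero
    -- totalDegree (g i) = 1 means some monomial of degree 1 has nonzero coeff
    have hg0 : g i ≠ 0 := fun h => by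
      have h1 := hdeg i; rw [h, totalDegree_zero] at h1; simp at h1
    have hne : (g i).support.Nonempty := support_nonempty.mpr hg0
    obtain ⟨m, hm, hms⟩ := Finset.exists_mem_eq_sup _ hne (fun m : Fin n →₀ ℕ => m.sum fun _ e => e)
    have hms1 : (m.sum fun _ e => e) = 1 := by
      have h1 := hdeg i
      rw [totalDegree, hms] at h1
      exact h1
    have hm0 : m ≠ 0 := by
      intro h; rw [h] at hms1; simp [Finsupp.sum_zero_index] at hms1
    obtain ⟨j, rfl⟩ := monomial_deg_le_one m hms1.le hm0
    have : co i j ≠ 0 := Finsupp.mem_support_iff.mp hm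
    apply this
    have : coeff (Finsupp.single j 1) (L i) = co i j := by
      rw [hL]
      simp only [coeff_sum, coeff_C_mul, coeff_X']
      rw [Finset.sum_eq_single j] <;> simp +contextual [Finsupp.single_eq_single_iff]
    rw [hzero] at this
    simpa using this.symm
  have hLdeg : ∀ i, (L i).totalDegree ≤ 1 := by
    intro i
    refine (totalDegree_finset_sum _ _).trans (Finset.sup_le fun j _ => ?_)
    refine (totalDegree_mul _ _).trans ?_
    simp [totalDegree_C, totalDegree_X]
  -- choose v
  obtain ⟨v, hv⟩ := affine_SZ L hL0 hLdeg hF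
  set α : ι → F := fun i => eval v (L i) with hα
  have hα0 : ∀ i, α i ≠ 0 := hv
  -- Q polynomials
  set Q : {i : ι // i ≠ i0} → MvPolynomial (Fin n) F :=
    fun i => C (α i0) * g i - C (α i.1) * g i0 with hQ
  have hQ0 : ∀ i, Q i ≠ 0 := by
    rintro ⟨i, hi⟩ hzero
    rw [hQ, sub_eq_zero] at hzero
    have hzero' : C (α i0) * g i = C (α i) * g i0 := hzero
    apply hnp i hi ((α i)⁻¹ * α i0)
    rw [smul_eq_C_mul, map_mul, mul_assoc, hzero', ← mul_assoc, ← map_mul,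
      inv_mul_cancel₀ (hα0 i), map_one, one_mul]
  have hQdeg : ∀ i, (Q i).totalDegree ≤ 1 := by
    rintro ⟨i, hi⟩
    refine (totalDegree_sub _ _).trans (max_le ?_ ?_) <;>
    · refine (totalDegree_mul _ _).trans ?_
      simp [totalDegree_C, hdeg]
  have hcardQ : ((Fintype.card {i : ι // i ≠ i0} + 1 : ℕ) : Cardinal) ≤ Cardinal.mk F := by
    refine le_trans (Nat.cast_le.mpr ?_) hF
    have := Fintype.card_subtype_le (fun i : ι => i ≠ i0)
    omega
  obtain ⟨w, hw⟩ := affine_SZ Q hQ0 hQdeg hcardQ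
  set β : ι → F := fun i => eval w (g i) with hβ
  have hΔ : ∀ i : ι, i ≠ i0 → α i0 * β i - α i * β i0 ≠ 0 := by
    intro i hi
    have := hw ⟨i, hi⟩
    rw [hQ] at this
    simpa [hβ] using this
  -- substitute the line x ↦ v*X + w
  set φ : MvPolynomial (Fin n) F →ₐ[F] Polynomial F :=
    aeval (fun j => Polynomial.C (v j) * Polynomial.X + Polynomial.C (w j)) with hφ
  have hφg : ∀ i, φ (g i) = Polynomial.C (α i) * Polynomial.X + Polynomial.C (β i) := by
    intro i
    have hαi : α i = ∑ j, co i j * v j := by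
      rw [hα, hL]; simp
    have hβi : β i = e i + ∑ j, co i j * w j := by
      show (eval w) (g i) = _
      conv_lhs => rw [deg_le_one_decomp (g i) (hdeg i).le]
      simp [he, hco]
    conv_lhs => rw [deg_le_one_decomp (g i) (hdeg i).le]
    rw [hαi, hβi]
    simp only [map_add, map_sum, map_mul, aeval_C, aeval_X, hφ, Polynomial.algebraMap_eq,
      Polynomial.C_add, Polynomial.C_mul, mul_add, Finset.sum_add_distrib, Finset.sum_mul,
      mul_assoc]
    abel
  have heq2 : ∑ i, Polynomial.C (b i) * (Polynomial.C (α i) * Polynomial.X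
      + Polynomial.C (β i)) ^ d = 0 := by
    have h2 := congrArg φ heq
    rw [map_sum, map_zero] at h2
    rw [← h2]
    refine Finset.sum_congr rfl fun i _ => ?_
    rw [map_mul, map_pow, hφg i, hφ, aeval_C, Polynomial.algebraMap_eq]
  set γ : ι → F := fun i => β i * (α i)⁻¹ with hγ
  have heq3 : ∑ i, Polynomial.C (b i * α i ^ d)
      * (Polynomial.X + Polynomial.C (γ i)) ^ d = 0 := by
    rw [← heq2]
    refine Finset.sum_congr rfl fun i _ => ?_
    have hnorm : Polynomial.C (α i) * Polynomial.X + Polynomial.C (β i)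
        = Polynomial.C (α i) * (Polynomial.X + Polynomial.C (γ i)) := by
      rw [mul_add, ← Polynomial.C_mul, hγ]
      congr 2
      rw [mul_comm, mul_assoc, inv_mul_cancel₀ (hα0 i), mul_one]
    rw [hnorm, mul_pow, ← Polynomial.C_pow, ← mul_assoc, ← Polynomial.C_mul]
  set s : Finset F := Finset.univ.image γ with hsdef
  set E : F → F := fun u => ∑ i ∈ Finset.univ.filter (fun i => γ i = u), b i * α i ^ d with hE
  have hgroup : ∑ u ∈ s, Polynomial.C (E u) * (Polynomial.X + Polynomial.C u) ^ d = 0 := by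
    rw [← heq3,
      ← Finset.sum_fiberwise_of_maps_to (g := γ)
        (fun i _ => Finset.mem_image_of_mem γ (Finset.mem_univ i))
        (fun i => Polynomial.C (b i * α i ^ d) * (Polynomial.X + Polynomial.C (γ i)) ^ d)]
    refine Finset.sum_congr rfl fun u hu => ?_
    simp only [hE, map_sum, Finset.sum_mul]
    exact Finset.sum_congr rfl fun i hi => by rw [(Finset.mem_filter.mp hi).2]
  have hcards : s.card ≤ d + 1 := by
    have h1 : s.card ≤ Fintype.card ι := (Finset.card_image_le).trans (by simp)
    omega
  have hvand := univ_vandermonde hchar s hcards E hgroup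
  have hfiber : Finset.univ.filter (fun i => γ i = γ i0) = {i0} := by
    ext i
    simp only [Finset.mem_filter, Finset.mem_univ, true_and, Finset.mem_singleton]
    constructor
    · intro hgi
      by_contra hne
      apply hΔ i hne
      have h5 : β i * (α i)⁻¹ = β i0 * (α i0)⁻¹ := hgi
      rw [inv_eq_one_div, inv_eq_one_div, mul_one_div, mul_one_div,
        div_eq_div_iff (hα0 i) (hα0 i0)] at h5
      linear_combination h5
    · rintro rfl; rfl
  have hfin := hvand (γ i0) (Finset.mem_image_of_mem γ (Finset.mem_univ i0))
  rw [hE] at hfin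
  simp only [hfiber, Finset.sum_singleton] at hfin
  exact (mul_eq_zero.mp hfin).resolve_right (pow_ne_zero d (hα0 i0))

/-- Uniqueness of minimal representations of a polynomial as a sum of `k`
`d`-th powers of degree-1 polynomials: if `|F| ≥ 2k+1`, `char F = 0` or `char F > d`,
`d ≥ 2k+1`, and `∑ i, c i • ℓ i ^ d = ∑ i, c' i • a i ^ d` are two minimal representations,
then there is a permutation `π` matching each `ℓ i` with a nonzero scalar multiple of
`a (π i)`. -/
theorem unique_minimal_sum_pow {F : Type*} [Field F] (n k d : ℕ)
    (hF : ((2 * k + 1 : ℕ) : Cardinal) ≤ Cardinal.mk F)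
    (hchar : CharZero F ∨ d < ringChar F)
    (hd : 2 * k + 1 ≤ d)
    (ℓ a : Fin k → MvPolynomial (Fin n) F)
    (c c' : Fin k → F)
    (hdegℓ : ∀ i, (ℓ i).totalDegree = 1)
    (hdega : ∀ i, (a i).totalDegree = 1)
    (hc : ∀ i, c i ≠ 0) (hc' : ∀ i, c' i ≠ 0)
    (hpairℓ : ∀ i j, i ≠ j → ∀ t : F, ℓ i ≠ t • ℓ j)
    (hpaira : ∀ i j, i ≠ j → ∀ t : F, a i ≠ t • a j)
    (heq : (∑ i, MvPolynomial.C (c i) * (ℓ i) ^ d) = ∑ i, MvPolynomial.C (c' i) * (a i) ^ d) :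
    ∃ π : Equiv.Perm (Fin k), ∀ i, ∃ t : F, t ≠ 0 ∧ ℓ i = t • a (π i) := by
  classical
  set g : Fin k ⊕ Fin k → MvPolynomial (Fin n) F := Sum.elim ℓ a with hg
  set b : Fin k ⊕ Fin k → F := Sum.elim c (fun i => -c' i) with hb
  have hdegg : ∀ i, (g i).totalDegree = 1 := by
    rintro (i | i) <;> simp [hg, hdegℓ, hdega]
  have heq0 : ∑ i, C (b i) * (g i) ^ d = 0 := by
    rw [Fintype.sum_sum_type]
    simp only [hb, hg, Sum.elim_inl, Sum.elim_inr, map_neg, neg_mul, Finset.sum_neg_distrib]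
    rw [heq, add_neg_cancel]
  have hcard : ((Fintype.card (Fin k ⊕ Fin k) + 1 : ℕ) : Cardinal) ≤ Cardinal.mk F := by
    have h1 : Fintype.card (Fin k ⊕ Fin k) + 1 = 2 * k + 1 := by simp [two_mul]
    rw [h1]; exact hF
  have hdd : Fintype.card (Fin k ⊕ Fin k) ≤ d := by simp [two_mul] at *; omega
  have hmatch : ∀ i, ∃ j, ∃ t : F, t ≠ 0 ∧ ℓ i = t • a j := by
    intro i
    by_contra hno
    push_neg at hno
    have hkey := key_indep hchar hcard hdd g b hdegg (Sum.inl i) ?_ heq0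
    · exact hc i (by simpa [hb] using hkey)
    · rintro (i' | j) hne t
      · exact hpairℓ i i' (fun h => hne (by rw [h])) t
      · intro hcontra
        rcases eq_or_ne t 0 with rfl | ht0
        · rw [hg] at hcontra
          simp only [Sum.elim_inl, Sum.elim_inr, zero_smul] at hcontra
          have h2 := hdegℓ i
          rw [hcontra, totalDegree_zero] at h2
          exact one_ne_zero h2.symm
        · exact hno j t ht0 (by simpa [hg] using hcontra)
  choose σ t ht hℓt using hmatch
  have hinj : Function.Injective σ := by
    intro i1 i2 h12
    by_contra hne
    apply hpairℓ i1 i2 hne (t i1 * (t i2)⁻¹)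
    rw [hℓt i1, h12, hℓt i2, smul_smul, mul_assoc, inv_mul_cancel₀ (ht i2), mul_one]
  refine ⟨Equiv.ofBijective σ ((Fintype.bijective_iff_injective_and_card σ).mpr ⟨hinj, rfl⟩),
    fun i => ⟨t i, ht i, hℓt i⟩⟩
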